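/- Let n ≥ 4 and suppose λ₁, λ₂, μ, λ̄₁, λ̄₂, b ∈ ℝ satisfy λ₁ ≠ μ, λ₂ ≠ μ, λ₁ ≠ λ₂, λ₁ ≠ λ̄₁, λ₁ + λ₂ + (n−2)μ = λ̄₁ + λ̄₂ + (n−2)μ = 0, λ₁² + λ₂² = λ̄₁² + λ̄₂² + 2b², and suppose real numbers x, y (playing the roles of B_{12,α} and C_α) satisfy (λ₁−λ₂)·μ·b·x = ((n−1)/n)(λ̄₁ − λ₁)·y and (λ₁ − λ̄₁)(λ₁−λ₂)·μ·x = ((n−1)/n)·b·y. Then y = 0, and moreover μ·x = 0. -/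
import Mathlib


/-- The algebraic core of the multiplicity-`(n−2)` analysis (equations (6.7),
(6.8) of the paper): with `λ₁, λ₂, μ, …, μ` the Möbius principal curvatures of
`f` and `(λ̄₁, b; b, λ̄₂), μ, …, μ` those of a deformation `f̄`, the quantities
`x = B_{12,α}` and `y = C_α` satisfy
`(λ₁−λ₂)·μ·b·x = ((n−1)/n)(λ̄₁−λ₁)·y` and
`(λ₁−λ̄₁)(λ₁−λ₂)·μ·x = ((n−1)/n)·b·y`; together with `λ₁ ≠ λ̄₁` these force
`y = 0` and `μ·x = 0`. -/
theorem stmt17 (n : ℕ) (hn : 4 ≤ n)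
    (l₁ l₂ μ lb₁ lb₂ b x y : ℝ)
    (h1 : l₁ ≠ μ) (h2 : l₂ ≠ μ) (h3 : l₁ ≠ l₂) (h4 : l₁ ≠ lb₁)
    (hs1 : l₁ + l₂ + ((n : ℝ) - 2) * μ = 0)
    (hs2 : lb₁ + lb₂ + ((n : ℝ) - 2) * μ = 0)
    (hnorm : l₁ ^ 2 + l₂ ^ 2 = lb₁ ^ 2 + lb₂ ^ 2 + 2 * b ^ 2)
    (e1 : (l₁ - l₂) * μ * b * x = (((n : ℝ) - 1) / n) * (lb₁ - l₁) * y)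
    (e2 : (l₁ - lb₁) * (l₁ - l₂) * μ * x = (((n : ℝ) - 1) / n) * b * y) :
    y = 0 ∧ μ * x = 0 := by
  have hn0 : (0:ℝ) < (n:ℝ) := by positivity
  have hc : (0:ℝ) < ((n : ℝ) - 1) / n := by
    apply div_pos _ hn0
    have : (4:ℝ) ≤ (n:ℝ) := by exact_mod_cast hn
    linarith
  have hd : l₁ - lb₁ ≠ 0 := sub_ne_zero.mpr h4
  -- multiply e1 by (l₁ - lb₁) and substitute e2
  have key : (((n : ℝ) - 1) / n) * y * (b ^ 2 + (l₁ - lb₁) ^ 2) = 0 := by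
    linear_combination (l₁ - lb₁) * e1 - b * e2
  have hy : y = 0 := by
    have hpos : (0:ℝ) < b ^ 2 + (l₁ - lb₁) ^ 2 := by positivity
    have := mul_eq_zero.mp key
    rcases this with h | h
    · rcases mul_eq_zero.mp h with h' | h'
      · exact absurd h' (ne_of_gt hc)
      · exact h'
    · exact absurd h (ne_of_gt hpos)
  refine ⟨hy, ?_⟩
  have : (l₁ - lb₁) * ((l₁ - l₂) * (μ * x)) = 0 := by
    rw [hy] at e2; linarith [e2]
  rcases mul_eq_zero.mp this with h | h
  · exact absurd h hd
  · rcases mul_eq_zero.mp h with h' | h'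
    · exact absurd h' (sub_ne_zero.mpr h3)
    · exact h'
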